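/- For Z₁, Z₂ independent standard Gaussian random variables and c ∈ [−1,1], the quantity 2·E[φ(Z₁)·φ(cZ₁ + √(1−c²)Z₂)], where φ(x) = max(x,0) is the ReLU function, equals (1/π)(c·arcsin(c) + √(1−c²)) + c/2. -/

import Mathlib

open MeasureTheory ProbabilityTheory

section Auxiliary

open Real Set Filter

private lemma gaussian_prod_eq' :
    (gaussianReal 0 1).prod (gaussianReal 0 1)
      = (volume.prod volume).withDensity
          (fun p => gaussianPDF 0 1 p.1 * gaussianPDF 0 1 p.2) := by
  have h1 : gaussianReal 0 1 = volume.withDensity (gaussianPDF 0 1) :=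
    gaussianReal_of_var_ne_zero 0 one_ne_zero
  refine Measure.prod_eq (μ := gaussianReal 0 1) (ν := gaussianReal 0 1) fun s t hs ht => ?_
  rw [withDensity_apply _ (hs.prod ht), ← Measure.prod_restrict,
    lintegral_prod_mul (measurable_gaussianPDF 0 1).aemeasurable
      (measurable_gaussianPDF 0 1).aemeasurable,
    h1, withDensity_apply _ hs, withDensity_apply _ ht]

private lemma integral_gaussian_prod_eq' (g : ℝ × ℝ → ℝ) :
    ∫ z, g z ∂((gaussianReal 0 1).prod (gaussianReal 0 1))
      = ∫ z : ℝ × ℝ, (gaussianPDFReal 0 1 z.1 * gaussianPDFReal 0 1 z.2) * g z := by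
  rw [gaussian_prod_eq']
  have hd : (fun p : ℝ × ℝ => gaussianPDF 0 1 p.1 * gaussianPDF 0 1 p.2)
      = fun p : ℝ × ℝ =>
        ((gaussianPDFReal 0 1 p.1 * gaussianPDFReal 0 1 p.2).toNNReal : ENNReal) := by
    funext p
    rw [gaussianPDF, gaussianPDF, ENNReal.ofReal, ENNReal.ofReal, ← ENNReal.coe_mul,
      Real.toNNReal_mul (gaussianPDFReal_nonneg 0 1 p.1)]
  rw [hd, integral_withDensity_eq_integral_smul]
  · congr 1
    funext p
    rw [NNReal.smul_def, Real.coe_toNNReal _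
      (mul_nonneg (gaussianPDFReal_nonneg 0 1 p.1) (gaussianPDFReal_nonneg 0 1 p.2)),
      smul_eq_mul]
  · exact ((measurable_gaussianPDFReal 0 1).comp measurable_fst |>.mul
      ((measurable_gaussianPDFReal 0 1).comp measurable_snd)).real_toNNReal

private lemma radial_int' : ∫ r in Ioi (0:ℝ), r ^ 3 * exp (-r ^ 2 / 2) = 2 := by
  have hint : IntegrableOn (fun r : ℝ => r ^ 3 * exp (-r ^ 2 / 2)) (Ioi 0) := by
    have h := integrableOn_rpow_mul_exp_neg_mul_sq (b := (1:ℝ)/2) (by norm_num)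
      (s := 3) (by norm_num)
    refine (h.congr_fun (fun x hx => ?_) measurableSet_Ioi)
    have h3 : x ^ (3:ℝ) = x ^ (3:ℕ) := by
      rw [← rpow_natCast x 3]; norm_num
    beta_reduce; rw [h3]; ring_nf
  have hderiv : ∀ x ∈ Ici (0:ℝ), HasDerivAt (fun r : ℝ => -(r ^ 2 + 2) * exp (-r ^ 2 / 2))
      (x ^ 3 * exp (-x ^ 2 / 2)) x := by
    intro x _
    have h1 : HasDerivAt (fun r : ℝ => -(r ^ 2 + 2)) (-(2 * x)) x := by
      exact (((hasDerivAt_pow 2 x).add_const 2).neg).congr_deriv (by norm_num)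
    have h3 : HasDerivAt (fun r : ℝ => -r ^ 2 / 2) (-(2 * x) / 2) x :=
      ((hasDerivAt_pow 2 x).neg.div_const 2).congr_deriv (by norm_num)
    have h2 := h3.exp
    refine (h1.mul h2).congr_deriv ?_
    ring
  have htend : Tendsto (fun r : ℝ => -(r ^ 2 + 2) * exp (-r ^ 2 / 2)) atTop (nhds 0) := by
    have hsq : Tendsto (fun r : ℝ => r ^ 2 / 2) atTop atTop :=
      (tendsto_pow_atTop two_ne_zero).atTop_div_const (by norm_num)
    have ha : Tendsto (fun r : ℝ => (r ^ 2 / 2) * exp (-(r ^ 2 / 2))) atTop (nhds 0) := by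
      have := (tendsto_pow_mul_exp_neg_atTop_nhds_zero 1).comp hsq
      simpa [Function.comp_def] using this
    have hb : Tendsto (fun r : ℝ => exp (-(r ^ 2 / 2))) atTop (nhds 0) :=
      Real.tendsto_exp_atBot.comp (tendsto_neg_atBot_iff.mpr hsq)
    have h2 := ((ha.const_mul 2).add (hb.const_mul 2)).neg
    have h2' : Tendsto (fun r : ℝ =>
        -(2 * (r ^ 2 / 2 * exp (-(r ^ 2 / 2))) + 2 * exp (-(r ^ 2 / 2)))) atTop (nhds 0) := by
      simpa using h2
    refine h2'.congr fun r => by rw [show -r^2/2 = -(r^2/2) by ring]; ring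
  have h := integral_Ioi_of_hasDerivAt_of_tendsto' hderiv hint htend
  rw [h]
  norm_num

private lemma mid_int' (α : ℝ) :
    ∫ θ in (α - π/2)..(π/2), cos θ * cos (θ - α)
      = (sin α + (π - α) * cos α) / 2 := by
  have hF : ∀ θ : ℝ, HasDerivAt (fun t : ℝ => t * cos α / 2 + sin (2*t - α) / 4)
      (cos θ * cos (θ - α)) θ := by
    intro θ
    have h1 : HasDerivAt (fun t : ℝ => t * cos α / 2) (cos α / 2) θ := by
      simpa using ((hasDerivAt_id θ).mul_const (cos α)).div_const 2
    have h2 : HasDerivAt (fun t : ℝ => 2*t - α) 2 θ := by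
      simpa using ((hasDerivAt_id θ).const_mul 2).sub_const α
    have h3 := (h2.sin).div_const 4
    have := h1.add h3
    refine this.congr_deriv ?_
    have e1 : cos (θ - α) = cos θ * cos α + sin θ * sin α := cos_sub θ α
    have e2 : cos (2*θ - α) = cos (2*θ) * cos α + sin (2*θ) * sin α := cos_sub _ α
    rw [e1, e2, cos_two_mul, sin_two_mul]
    have := sin_sq_add_cos_sq θ
    nlinarith [this]
  rw [intervalIntegral.integral_eq_sub_of_hasDerivAt (fun θ _ => hF θ)
    (((continuous_cos.mul (by continuity)).continuousOn).intervalIntegrable)]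
  have e3 : 2 * (π/2) - α = π - α := by ring
  have e4 : 2 * (α - π/2) - α = α - π := by ring
  rw [e3, e4, sin_pi_sub, sin_sub_pi]
  ring

private lemma angular_int' {α : ℝ} (h0 : 0 ≤ α) (hπ : α ≤ π) :
    ∫ θ in Ioo (-π) π, max (cos θ) 0 * max (cos (θ - α)) 0
      = (sin α + (π - α) * cos α) / 2 := by
  have hpi := pi_pos
  have hcont : Continuous fun θ : ℝ => max (cos θ) 0 * max (cos (θ - α)) 0 := by
    continuity
  have hIoo : ∫ θ in Ioo (-π) π, max (cos θ) 0 * max (cos (θ - α)) 0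
      = ∫ θ in (-π)..π, max (cos θ) 0 * max (cos (θ - α)) 0 := by
    rw [intervalIntegral.integral_of_le (by linarith), integral_Ioc_eq_integral_Ioo]
  rw [hIoo]
  have h1 : (-π) ≤ α - π/2 := by linarith
  have h2 : α - π/2 ≤ π/2 := by linarith
  have h3 : (π/2 : ℝ) ≤ π := by linarith
  have ii : ∀ a b : ℝ, IntervalIntegrable
      (fun θ => max (cos θ) 0 * max (cos (θ - α)) 0) volume a b :=
    fun a b => hcont.intervalIntegrable a b
  rw [← intervalIntegral.integral_add_adjacent_intervals (ii (-π) (α - π/2)) (ii (α-π/2) π),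
    ← intervalIntegral.integral_add_adjacent_intervals (ii (α - π/2) (π/2)) (ii (π/2) π)]
  have hz1 : ∫ θ in (-π)..(α - π/2), max (cos θ) 0 * max (cos (θ - α)) 0 = 0 := by
    rw [← intervalIntegral.integral_zero (a := -π) (b := (α - π/2)) (E := ℝ)]
    apply intervalIntegral.integral_congr
    intro θ hθ
    rw [uIcc_of_le h1] at hθ
    rcases le_or_gt (cos θ) 0 with hcθ | hcθ
    · simp [max_eq_right hcθ]
    · have hθ2 : -π/2 < θ := by
        by_contra hcon
        push_neg at hcon
        have : cos θ ≤ 0 := by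
          rw [← cos_neg]
          exact cos_nonpos_of_pi_div_two_le_of_le (by linarith) (by linarith [hθ.1])
        linarith
      have : cos (θ - α) ≤ 0 := by
        rw [← cos_neg, neg_sub]
        exact cos_nonpos_of_pi_div_two_le_of_le (by linarith [hθ.2]) (by linarith)
      simp [max_eq_right this]
  have hz3 : ∫ θ in (π/2)..π, max (cos θ) 0 * max (cos (θ - α)) 0 = 0 := by
    rw [← intervalIntegral.integral_zero (a := π/2) (b := π) (E := ℝ)]
    apply intervalIntegral.integral_congr
    intro θ hθ
    rw [uIcc_of_le h3] at hθ
    have : cos θ ≤ 0 :=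
      cos_nonpos_of_pi_div_two_le_of_le hθ.1 (by linarith [hθ.2])
    simp [max_eq_right this]
  have hmid : ∫ θ in (α - π/2)..(π/2), max (cos θ) 0 * max (cos (θ - α)) 0
      = ∫ θ in (α - π/2)..(π/2), cos θ * cos (θ - α) := by
    apply intervalIntegral.integral_congr
    intro θ hθ
    rw [uIcc_of_le h2] at hθ
    have hc1 : 0 ≤ cos θ :=
      cos_nonneg_of_mem_Icc ⟨by linarith [hθ.1], hθ.2⟩
    have hc2 : 0 ≤ cos (θ - α) :=
      cos_nonneg_of_mem_Icc ⟨by linarith [hθ.1], by linarith [hθ.2]⟩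
    simp only [max_eq_left hc1, max_eq_left hc2]
  rw [hz1, hz3, hmid, mid_int']
  ring

private lemma core' (c : ℝ) (hc : c ∈ Set.Icc (-1 : ℝ) 1) :
    ∫ z : ℝ × ℝ, (gaussianPDFReal 0 1 z.1 * gaussianPDFReal 0 1 z.2) *
        (max z.1 0 * max (c * z.1 + Real.sqrt (1 - c ^ 2) * z.2) 0)
      = π⁻¹ * ((sin (arccos c) + (π - arccos c) * c) / 2) := by
  set α := arccos c with hα
  set f : ℝ × ℝ → ℝ := fun z => (gaussianPDFReal 0 1 z.1 * gaussianPDFReal 0 1 z.2) *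
        (max z.1 0 * max (c * z.1 + Real.sqrt (1 - c ^ 2) * z.2) 0) with hf
  rw [show (∫ z : ℝ × ℝ, f z) = ∫ p in polarCoord.target, p.1 • f (polarCoord.symm p) from
    (integral_comp_polarCoord_symm f).symm]
  have htarget : polarCoord.target = Ioi (0:ℝ) ×ˢ Ioo (-π) π := rfl
  rw [htarget]
  have hcos : cos α = c := Real.cos_arccos hc.1 hc.2
  have hsin : sin α = Real.sqrt (1 - c ^ 2) := by
    rw [hα, Real.sin_arccos]
  have key : ∀ p ∈ (Ioi (0:ℝ) ×ˢ Ioo (-π) π),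
      p.1 • f (polarCoord.symm p)
        = ((2*π)⁻¹ * (p.1 ^ 3 * exp (-p.1 ^ 2 / 2))) *
          (max (cos p.2) 0 * max (cos (p.2 - α)) 0) := by
    rintro ⟨r, θ⟩ ⟨hr, -⟩
    have hr0 : (0:ℝ) ≤ r := le_of_lt hr
    have hsymm : polarCoord.symm (r, θ) = (r * cos θ, r * sin θ) := rfl
    rw [hsymm, hf]
    simp only [gaussianPDFReal, NNReal.coe_one, mul_one, sub_zero]
    have hmax1 : max (r * cos θ) 0 = r * max (cos θ) 0 := by
      rw [mul_max_of_nonneg _ _ hr0, mul_zero]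
    have hmax2 : max (c * (r * cos θ) + Real.sqrt (1 - c ^ 2) * (r * sin θ)) 0
        = r * max (cos (θ - α)) 0 := by
      rw [mul_max_of_nonneg _ _ hr0, mul_zero, cos_sub, hcos, hsin]
      congr 1
      ring
    have hexp : exp (-r ^ 2 / 2)
        = exp (-(r * cos θ) ^ 2 / 2) * exp (-(r * sin θ) ^ 2 / 2) := by
      rw [← Real.exp_add]
      congr 1
      have h1 : (r * cos θ) ^ 2 + (r * sin θ) ^ 2 = r ^ 2 := by
        have := sin_sq_add_cos_sq θ
        nlinarith
      nlinarith [h1]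
    have hconst : (2*π:ℝ)⁻¹ = (√(2 * π))⁻¹ * (√(2 * π))⁻¹ := by
      rw [← mul_inv]
      congr 1
      exact (Real.mul_self_sqrt (by positivity)).symm
    rw [smul_eq_mul, hmax1, hmax2, hconst, hexp]
    ring
  rw [setIntegral_congr_fun (measurableSet_Ioi.prod measurableSet_Ioo) key,
    Measure.volume_eq_prod, ← Measure.prod_restrict,
    MeasureTheory.integral_prod_mul
      (f := fun r : ℝ => (2*π)⁻¹ * (r ^ 3 * exp (-r ^ 2 / 2)))
      (g := fun θ : ℝ => max (cos θ) 0 * max (cos (θ - α)) 0),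
    angular_int' (Real.arccos_nonneg c) (Real.arccos_le_pi c),
    MeasureTheory.integral_const_mul, radial_int']
  rw [hcos]
  field_simp
  ring

end Auxiliary

/-- For independent standard Gaussians Z₁, Z₂ and c ∈ [−1,1],
2·E[φ(Z₁)·φ(cZ₁ + √(1−c²)Z₂)] = (1/π)(c·arcsin c + √(1−c²)) + c/2,
where φ = ReLU. -/
theorem relu_gaussian_correlation (c : ℝ) (hc : c ∈ Set.Icc (-1 : ℝ) 1) :
    2 * ∫ z : ℝ × ℝ,
        max z.1 0 * max (c * z.1 + Real.sqrt (1 - c ^ 2) * z.2) 0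
        ∂((gaussianReal 0 1).prod (gaussianReal 0 1))
      = (1 / Real.pi) * (c * Real.arcsin c + Real.sqrt (1 - c ^ 2)) + c / 2 := by
  rw [integral_gaussian_prod_eq'
      (fun z => max z.1 0 * max (c * z.1 + Real.sqrt (1 - c ^ 2) * z.2) 0),
    core' c hc, Real.sin_arccos, Real.arccos_eq_pi_div_two_sub_arcsin]
  have hπ : Real.pi ≠ 0 := Real.pi_ne_zero
  field_simp
  ring
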